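/- Let A be a complex n×n matrix, b ∈ ℂⁿ, and x* ∈ ℂⁿ with A x* = b. Let π : {1,…,n} → {1,…,m} be a map assigning each index to a block, and let M be an invertible complex n×n matrix that is block diagonal with respect to π, i.e., M_{i,j} = 0 whenever π(i) ≠ π(j). Assume ρ(|I − M⁻¹A|) < 1. Let Ω_k ⊆ {1,…,m} for each k ∈ ℕ be such that every s ∈ {1,…,m} belongs to Ω_k for infinitely many k, and for each s ∈ {1,…,m} let δ_s : {1,…,m} × ℕ → ℕ satisfy δ_s(q,k) ≤ k for all q, k and lim_{k→∞} δ_s(q,k) = ∞ for all q. Let x⁰ ∈ ℂⁿ be arbitrary and define the sequence (xᵏ)_{k∈ℕ} in ℂⁿ by: for every k and every index i with s := π(i), x^{k+1}_i := x^{δ_s(s,k)}_i + Σ_j (M⁻¹)_{i,j} (b_j − Σ_l A_{j,l} x^{δ_s(π(l),k)}_l) if s ∈ Ω_k, while x^{k+1}_i := xᵏ_i if s ∉ Ω_k. Then xᵏ converges to x* as k → ∞. -/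

import Mathlib

open Matrix Filter
open scoped ENNReal NNReal

/-- Spectral radius of a real square matrix: the supremum of the moduli of its
complex eigenvalues. -/
noncomputable def specRad {m : Type*} [Fintype m] [DecidableEq m]
    (A : Matrix m m ℝ) : ℝ :=
  sSup ((fun z => ‖z‖) '' spectrum ℂ (A.map Complex.ofReal))

/-- Entrywise absolute value (modulus) of a complex matrix. -/
noncomputable def cabs {m l : Type*} (A : Matrix m l ℂ) : Matrix m l ℝ :=
  fun i j => ‖A i j‖

attribute [local instance] Matrix.linftyOpNormedRing Matrix.linftyOpNormedAlgebra

section helpers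

variable {n : ℕ}

lemma entry_norm_le (M : Matrix (Fin n) (Fin n) ℂ) (i j : Fin n) : ‖M i j‖ ≤ ‖M‖ := by
  rw [Matrix.linfty_opNorm_def]
  calc ‖M i j‖ ≤ ∑ j', (‖M i j'‖₊ : ℝ) := by
        exact_mod_cast Finset.single_le_sum (f := fun j' => (‖M i j'‖₊ : ℝ))
          (fun _ _ => NNReal.coe_nonneg _) (Finset.mem_univ j)
    _ ≤ _ := by
        exact_mod_cast NNReal.coe_le_coe.2
          (Finset.le_sup (f := fun i => ∑ j', ‖M i j'‖₊) (Finset.mem_univ i))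

lemma completeMat : CompleteSpace (Matrix (Fin n) (Fin n) ℂ) :=
  FiniteDimensional.complete ℂ _

end helpers

lemma exists_w {n : ℕ} (hn : 0 < n) (B : Matrix (Fin n) (Fin n) ℝ)
    (hB : ∀ i j, 0 ≤ B i j) (hρ : specRad B < 1) :
    ∃ (w : Fin n → ℝ) (θ : ℝ), 0 ≤ θ ∧ θ < 1 ∧ (∀ i, 1 ≤ w i) ∧
      ∀ i, B.mulVec w i ≤ θ * w i := by
  haveI : NeZero n := ⟨hn.ne'⟩
  haveI : Nonempty (Fin n) := Fin.pos_iff_nonempty.1 hn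
  haveI : CompleteSpace (Matrix (Fin n) (Fin n) ℂ) := completeMat
  set Bc : Matrix (Fin n) (Fin n) ℂ := B.map Complex.ofReal with hBc
  -- powers map
  have hpow : ∀ k : ℕ, (B ^ k).map Complex.ofReal = Bc ^ k := by
    intro k
    exact map_pow (Complex.ofRealHom.mapMatrix) B k
  -- entries of powers are nonneg
  have hBpow : ∀ k i j, 0 ≤ (B ^ k) i j := by
    intro k
    induction k with
    | zero => intro i j; by_cases h : i = j <;> simp [h, Matrix.one_apply]
    | succ k ih =>
      intro i j
      rw [pow_succ, Matrix.mul_apply]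
      exact Finset.sum_nonneg fun l _ => mul_nonneg (ih i l) (hB l j)
  -- spectral radius bound
  have hsr : spectralRadius ℂ Bc < 1 := by
    have hub : ∀ z ∈ spectrum ℂ Bc, ‖z‖ ≤ specRad B := by
      intro z hz
      apply le_csSup
      · refine ⟨‖Bc‖, ?_⟩
        rintro y ⟨z', hz', rfl⟩
        exact spectrum.norm_le_norm_of_mem hz'
      · exact ⟨z, hz, rfl⟩
    have h2 : spectralRadius ℂ Bc ≤ ENNReal.ofReal (specRad B) := by
      apply iSup₂_le
      intro z hz
      rw [← ENNReal.ofReal_coe_nnreal, coe_nnnorm]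
      exact ENNReal.ofReal_le_ofReal (hub z hz)
    exact lt_of_le_of_lt h2 (ENNReal.ofReal_lt_one.2 hρ)
  -- find k0 with ‖Bc ^ k0‖ < 1
  obtain ⟨k0, hk0pos, hk0⟩ : ∃ k0, 0 < k0 ∧ ‖Bc ^ k0‖ < 1 := by
    have hG := spectrum.pow_nnnorm_pow_one_div_tendsto_nhds_spectralRadius Bc
    have hev : ∀ᶠ k : ℕ in atTop, (‖Bc ^ k‖₊ : ℝ≥0∞) ^ (1 / (k : ℝ)) < 1 :=
      hG.eventually_lt_const hsr
    obtain ⟨k0, hlt, hpos⟩ := (hev.and (eventually_gt_atTop 0)).exists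
    refine ⟨k0, hpos, ?_⟩
    by_contra hcon
    push_neg at hcon
    have h1 : (1 : ℝ≥0∞) ≤ (‖Bc ^ k0‖₊ : ℝ≥0∞) := by
      rw [← ENNReal.ofReal_coe_nnreal, coe_nnnorm]
      exact ENNReal.one_le_ofReal.2 hcon
    have : (1 : ℝ≥0∞) ≤ (‖Bc ^ k0‖₊ : ℝ≥0∞) ^ (1 / (k0 : ℝ)) := by
      calc (1 : ℝ≥0∞) = 1 ^ (1 / (k0 : ℝ)) := (ENNReal.one_rpow _).symm
        _ ≤ _ := ENNReal.rpow_le_rpow h1 (by positivity)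
    exact absurd hlt (not_lt.2 this)
  set q : ℝ := ‖Bc ^ k0‖ with hq
  have hq0 : 0 ≤ q := norm_nonneg _
  -- entrywise bound on powers B^(k0*j)
  have hentry : ∀ (j : ℕ) (i l : Fin n), (B ^ (k0 * j)) i l ≤ q ^ j := by
    intro j i l
    have h1 : (B ^ (k0 * j)) i l = ‖(Bc ^ (k0 * j)) i l‖ := by
      rw [← hpow]
      simp [Matrix.map_apply, Complex.norm_real, Real.norm_eq_abs,
        abs_of_nonneg (hBpow _ i l)]
    rw [h1]
    calc ‖(Bc ^ (k0 * j)) i l‖ ≤ ‖Bc ^ (k0 * j)‖ := entry_norm_le _ i l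
      _ = ‖(Bc ^ k0) ^ j‖ := by rw [← pow_mul]
      _ ≤ ‖Bc ^ k0‖ ^ j := norm_pow_le _ j
  -- 1 - B is invertible
  have hCunit : IsUnit (1 - B) := by
    have h1 : (1 : ℂ) ∉ spectrum ℂ Bc := by
      intro hmem
      have : (‖(1:ℂ)‖₊ : ℝ≥0∞) ≤ spectralRadius ℂ Bc :=
        le_iSup₂ (f := fun k (_ : k ∈ spectrum ℂ Bc) => (‖k‖₊ : ℝ≥0∞)) 1 hmem
      simp at this
      exact absurd hsr (not_lt.2 this)
    rw [spectrum.notMem_iff] at h1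
    have h2 : (algebraMap ℂ (Matrix (Fin n) (Fin n) ℂ)) 1 - Bc
        = (1 - B).map Complex.ofReal := by
      simp [hBc, Matrix.map_sub, Matrix.map_one Complex.ofReal Complex.ofReal_zero
        Complex.ofReal_one]
    rw [h2] at h1
    rw [Matrix.isUnit_iff_isUnit_det] at h1 ⊢
    have h3 : (1 - B).map Complex.ofReal = (Complex.ofRealHom.mapMatrix) (1 - B) := rfl
    rw [h3, ← RingHom.map_det] at h1
    simpa [isUnit_iff_ne_zero, Complex.ofRealHom_eq_coe, Complex.ofReal_eq_zero]
      using h1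
  set C : Matrix (Fin n) (Fin n) ℝ := 1 - B with hC
  have hdet : IsUnit C.det := (Matrix.isUnit_iff_isUnit_det _).1 hCunit
  have hCinvC : C⁻¹ * C = 1 := Matrix.nonsing_inv_mul _ hdet
  have hCCinv : C * C⁻¹ = 1 := Matrix.mul_nonsing_inv _ hdet
  -- geometric identity
  have hgeom : ∀ k : ℕ, C⁻¹ = (∑ j ∈ Finset.range k, B ^ j) + C⁻¹ * B ^ k := by
    intro k
    have h1 : C * (∑ j ∈ Finset.range k, B ^ j) = 1 - B ^ k := by
      have := mul_geom_sum B k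
      have h2 : C * (∑ j ∈ Finset.range k, B ^ j)
          = -((B - 1) * ∑ j ∈ Finset.range k, B ^ j) := by
        rw [hC]; simp [sub_mul, neg_sub]
      rw [h2, this]; simp [neg_sub]
    calc C⁻¹ = C⁻¹ * 1 := (mul_one _).symm
      _ = C⁻¹ * (C * (∑ j ∈ Finset.range k, B ^ j) + B ^ k) := by rw [h1]; simp
      _ = (C⁻¹ * C) * (∑ j ∈ Finset.range k, B ^ j) + C⁻¹ * B ^ k := by
          rw [mul_add, mul_assoc]
      _ = _ := by rw [hCinvC, one_mul]
  -- C⁻¹ entries are nonneg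
  have hCinv_nonneg : ∀ i l, 0 ≤ C⁻¹ i l := by
    intro i l
    set S : ℝ := ∑ t, |C⁻¹ i t| with hS
    have hbound : ∀ j : ℕ, -(S * q ^ j) ≤ C⁻¹ i l := by
      intro j
      have h1 := hgeom (k0 * j)
      have h2 : C⁻¹ i l = (∑ t ∈ Finset.range (k0 * j), (B ^ t) i l)
          + (C⁻¹ * B ^ (k0 * j)) i l := by
        conv_lhs => rw [h1]
        simp [Matrix.add_apply, Matrix.sum_apply]
      have h3 : 0 ≤ ∑ t ∈ Finset.range (k0 * j), (B ^ t) i l :=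
        Finset.sum_nonneg fun t _ => hBpow t i l
      have h4 : -(S * q ^ j) ≤ (C⁻¹ * B ^ (k0 * j)) i l := by
        rw [Matrix.mul_apply]
        have h5 : ∀ t : Fin n, -( |C⁻¹ i t| * q ^ j) ≤ C⁻¹ i t * (B ^ (k0 * j)) t l := by
          intro t
          have h6 : |C⁻¹ i t * (B ^ (k0 * j)) t l| ≤ |C⁻¹ i t| * q ^ j := by
            rw [abs_mul]
            exact mul_le_mul_of_nonneg_left
              (by rw [abs_of_nonneg (hBpow _ t l)]; exact hentry j t l)
              (abs_nonneg _)
          linarith [neg_abs_le (C⁻¹ i t * (B ^ (k0 * j)) t l)]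
        calc -(S * q ^ j) = ∑ t, -( |C⁻¹ i t| * q ^ j) := by
              rw [hS, Finset.sum_mul, ← Finset.sum_neg_distrib]
          _ ≤ _ := Finset.sum_le_sum fun t _ => h5 t
      linarith
    have htend : Tendsto (fun j : ℕ => -(S * q ^ j)) atTop (nhds 0) := by
      have := (tendsto_pow_atTop_nhds_zero_of_lt_one hq0 hk0).const_mul S
      simpa using this.neg
    exact le_of_tendsto htend (Eventually.of_forall hbound)
  -- construct w
  set w : Fin n → ℝ := C⁻¹.mulVec (fun _ => 1) with hw
  have hw_nonneg : ∀ i, 0 ≤ w i := by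
    intro i
    rw [hw, Matrix.mulVec, dotProduct]
    exact Finset.sum_nonneg fun t _ => by simpa using hCinv_nonneg i t
  have hCw : C.mulVec w = fun _ => 1 := by
    rw [hw, Matrix.mulVec_mulVec, hCCinv]
    simp
  have hBw : ∀ i, B.mulVec w i = w i - 1 := by
    intro i
    have := congrFun hCw i
    rw [hC, Matrix.sub_mulVec, Matrix.one_mulVec] at this
    have h2 : w i - B.mulVec w i = 1 := this
    linarith
  have hw1 : ∀ i, 1 ≤ w i := by
    intro i
    have h1 : 0 ≤ B.mulVec w i := by
      rw [Matrix.mulVec, dotProduct]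
      exact Finset.sum_nonneg fun t _ => mul_nonneg (hB i t) (hw_nonneg t)
    have := hBw i
    linarith
  -- the sup
  haveI : Nonempty (Fin n) := Fin.pos_iff_nonempty.1 hn
  set W : ℝ := Finset.univ.sup' Finset.univ_nonempty w with hW
  have hW1 : 1 ≤ W := by
    obtain ⟨i⟩ := (inferInstance : Nonempty (Fin n))
    exact le_trans (hw1 i) (Finset.le_sup' w (Finset.mem_univ i))
  have hWpos : 0 < W := lt_of_lt_of_le one_pos hW1
  refine ⟨w, 1 - 1 / W, by
      have : 1 / W ≤ 1 := by rw [div_le_one hWpos]; exact hW1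
      linarith,
    by have : 0 < 1 / W := by positivity
       linarith,
    hw1, ?_⟩
  intro i
  rw [hBw i]
  have hwle : w i ≤ W := Finset.le_sup' w (Finset.mem_univ i)
  have h1 : w i / W ≤ 1 := by rw [div_le_one hWpos]; exact hwle
  have h2 : (1 - 1 / W) * w i = w i - w i / W := by field_simp
  rw [h2]
  linarith

theorem stmt9 {n m : ℕ}
    (A M : Matrix (Fin n) (Fin n) ℂ) (b xstar : Fin n → ℂ)
    (hsol : A.mulVec xstar = b)
    (π : Fin n → Fin m)
    (hMunit : IsUnit M)
    (hMblock : ∀ i j, π i ≠ π j → M i j = 0)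
    (hρ : specRad (cabs (1 - M⁻¹ * A)) < 1)
    (Ω : ℕ → Set (Fin m))
    (hΩ : ∀ s : Fin m, ∀ K : ℕ, ∃ k ≥ K, s ∈ Ω k)
    (δ : Fin m → Fin m → ℕ → ℕ)
    (hδle : ∀ s q k, δ s q k ≤ k)
    (hδlim : ∀ s q, Tendsto (fun k => δ s q k) atTop atTop)
    (x : ℕ → Fin n → ℂ)
    (hupd : ∀ k i, π i ∈ Ω k → x (k + 1) i =
      x (δ (π i) (π i) k) i +
        ∑ j, M⁻¹ i j * (b j - ∑ l, A j l * x (δ (π i) (π l) k) l))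
    (hkeep : ∀ k i, π i ∉ Ω k → x (k + 1) i = x k i) :
    Tendsto x atTop (nhds xstar) := by
  rcases Nat.eq_zero_or_pos n with hn | hn
  · subst hn
    have hx : x = fun _ => xstar := funext fun k => funext fun i => i.elim0
    rw [hx]
    exact tendsto_const_nhds
  set T : Matrix (Fin n) (Fin n) ℂ := 1 - M⁻¹ * A with hT
  set B : Matrix (Fin n) (Fin n) ℝ := cabs T with hBdef
  have hBnn : ∀ i j, 0 ≤ B i j := fun i j => norm_nonneg _
  obtain ⟨w, θ, hθ0, hθ1, hw1, hBw⟩ := exists_w hn B hBnn hρ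
  have hw0 : ∀ i, 0 ≤ w i := fun i => le_trans zero_le_one (hw1 i)
  set E : ℕ → Fin n → ℝ := fun k i => ‖x k i - xstar i‖ with hE
  have hEnn : ∀ k i, 0 ≤ E k i := fun k i => norm_nonneg _
  -- fixed point: b j = ∑ l, A j l * xstar l
  have hb : ∀ j, b j = ∑ l, A j l * xstar l := by
    intro j
    rw [← hsol]
    rfl
  -- error recursion
  have hrec : ∀ k i, π i ∈ Ω k →
      E (k + 1) i ≤ ∑ l, B i l * E (δ (π i) (π l) k) l := by
    intro k i hmem
    have key : x (k + 1) i - xstar i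
        = ∑ l, T i l * (x (δ (π i) (π l) k) l - xstar l) := by
      have h2 : ∀ j, b j - ∑ l, A j l * x (δ (π i) (π l) k) l
          = -∑ l, A j l * (x (δ (π i) (π l) k) l - xstar l) := by
        intro j
        rw [hb j, ← Finset.sum_neg_distrib, ← Finset.sum_sub_distrib]
        exact Finset.sum_congr rfl fun l _ => by ring
      have h1 : x (k + 1) i = x (δ (π i) (π i) k) i
          - ∑ l, (M⁻¹ * A) i l * (x (δ (π i) (π l) k) l - xstar l) := by
        rw [hupd k i hmem]
        simp only [h2, mul_neg, Finset.sum_neg_distrib]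
        have h3 : ∑ j, M⁻¹ i j * ∑ l, A j l * (x (δ (π i) (π l) k) l - xstar l)
            = ∑ l, (M⁻¹ * A) i l * (x (δ (π i) (π l) k) l - xstar l) := by
          simp_rw [Finset.mul_sum, Matrix.mul_apply, Finset.sum_mul]
          rw [Finset.sum_comm]
          exact Finset.sum_congr rfl fun l _ => Finset.sum_congr rfl fun j _ => by ring
        rw [h3]
        ring
      have h4 : x (δ (π i) (π i) k) i - xstar i
          = ∑ l, (1 : Matrix (Fin n) (Fin n) ℂ) i l * (x (δ (π i) (π l) k) l - xstar l) := by
        rw [Finset.sum_eq_single i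
          (fun l _ hl => by rw [Matrix.one_apply_ne (Ne.symm hl), zero_mul])
          (fun h => absurd (Finset.mem_univ i) h)]
        rw [Matrix.one_apply_eq, one_mul]
      rw [h1, hT]
      simp only [Matrix.sub_apply, sub_mul, Finset.sum_sub_distrib]
      rw [← h4]
      ring
    have hEeq : E (k + 1) i
        = ‖∑ l, T i l * (x (δ (π i) (π l) k) l - xstar l)‖ := by
      rw [hE]; simp only; rw [key]
    rw [hEeq]
    calc ‖∑ l, T i l * (x (δ (π i) (π l) k) l - xstar l)‖
        ≤ ∑ l, ‖T i l * (x (δ (π i) (π l) k) l - xstar l)‖ :=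
          norm_sum_le _ _
      _ = ∑ l, B i l * E (δ (π i) (π l) k) l :=
          Finset.sum_congr rfl fun l _ => by rw [norm_mul]; rfl
  -- one-step contraction
  have hstep : ∀ (k : ℕ) (i : Fin n) (a : ℝ), 0 ≤ a → π i ∈ Ω k →
      (∀ l, E (δ (π i) (π l) k) l ≤ a * w l) → E (k + 1) i ≤ θ * (a * w i) := by
    intro k i a ha hmem hdel
    calc E (k + 1) i ≤ ∑ l, B i l * E (δ (π i) (π l) k) l := hrec k i hmem
      _ ≤ ∑ l, B i l * (a * w l) := Finset.sum_le_sum fun l _ =>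
          mul_le_mul_of_nonneg_left (hdel l) (hBnn i l)
      _ = a * B.mulVec w i := by
          rw [Matrix.mulVec, dotProduct, Finset.mul_sum]
          exact Finset.sum_congr rfl fun l _ => by ring
      _ ≤ a * (θ * w i) := mul_le_mul_of_nonneg_left (hBw i) ha
      _ = θ * (a * w i) := by ring
  -- global bound
  set c : ℝ := ∑ i, E 0 i with hc
  have hc0 : 0 ≤ c := Finset.sum_nonneg fun i _ => hEnn 0 i
  have hE0 : ∀ i, E 0 i ≤ c * w i := by
    intro i
    calc E 0 i ≤ c := Finset.single_le_sum (fun i _ => hEnn 0 i) (Finset.mem_univ i)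
      _ ≤ c * w i := le_mul_of_one_le_right hc0 (hw1 i)
  have L1 : ∀ k i, E k i ≤ c * w i := by
    intro k
    induction k using Nat.strong_induction_on with
    | _ k ih =>
      match k with
      | 0 => exact hE0
      | Nat.succ k =>
        intro i
        by_cases hmem : π i ∈ Ω k
        · have h1 := hstep k i c hc0 hmem fun l =>
            ih (δ (π i) (π l) k) (Nat.lt_succ_of_le (hδle _ _ _)) l
          calc E (k + 1) i ≤ θ * (c * w i) := h1
            _ ≤ 1 * (c * w i) := mul_le_mul_of_nonneg_right hθ1.le
                (mul_nonneg hc0 (hw0 i))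
            _ = c * w i := one_mul _
        · have : E (k + 1) i = E k i := by rw [hE]; simp [hkeep k i hmem]
          rw [this]
          exact ih k (Nat.lt_succ_self k) i
  -- epochs
  have L2 : ∀ p : ℕ, ∃ K : ℕ, ∀ k ≥ K, ∀ i, E k i ≤ θ ^ p * (c * w i) := by
    intro p
    induction p with
    | zero => exact ⟨0, fun k _ i => by simpa using L1 k i⟩
    | succ p ihp =>
      obtain ⟨K, hK⟩ := ihp
      obtain ⟨K', hK'⟩ : ∃ K', ∀ k ≥ K', ∀ s q, K ≤ δ s q k := by
        have hev : ∀ᶠ k in atTop, ∀ s q : Fin m, K ≤ δ s q k := by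
          rw [eventually_all]
          intro s
          rw [eventually_all]
          intro q
          exact (hδlim s q).eventually_ge_atTop K
        obtain ⟨K', h⟩ := eventually_atTop.1 hev
        exact ⟨K', h⟩
      -- for each block s, a time ks s ≥ K' with s ∈ Ω (ks s)
      have hks : ∀ s : Fin m, ∃ k, K' ≤ k ∧ s ∈ Ω k := by
        intro s
        obtain ⟨k, hk1, hk2⟩ := hΩ s K'
        exact ⟨k, hk1, hk2⟩
      choose ks hks1 hks2 using hks
      have hupdcase : ∀ (k : ℕ) (i : Fin n), K' ≤ k → π i ∈ Ω k →
          E (k + 1) i ≤ θ ^ (p + 1) * (c * w i) := by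
        intro k i hkK hmem
        have hdel : ∀ l, E (δ (π i) (π l) k) l ≤ (θ ^ p * c) * w l := by
          intro l
          have h1 := hK (δ (π i) (π l) k) (hK' k hkK (π i) (π l)) l
          rw [mul_assoc]
          exact h1
        have h2 := hstep k i (θ ^ p * c) (mul_nonneg (pow_nonneg hθ0 p) hc0) hmem hdel
        have h3 : θ * (θ ^ p * c * w i) = θ ^ (p + 1) * (c * w i) := by ring
        rw [h3] at h2
        exact h2
      have claim : ∀ (s : Fin m) (k : ℕ), ks s + 1 ≤ k → ∀ i, π i = s →
          E k i ≤ θ ^ (p + 1) * (c * w i) := by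
        intro s k hk
        induction k, hk using Nat.le_induction with
        | base =>
          intro i hi
          refine hupdcase (ks s) i (hks1 s) ?_
          rw [hi]; exact hks2 s
        | succ k hk ih =>
          intro i hi
          by_cases hmem : π i ∈ Ω k
          · exact hupdcase k i (le_trans (hks1 s) (le_trans (Nat.le_succ _) hk)) hmem
          · have hEq : E (k + 1) i = E k i := by
              rw [hE]; simp only; rw [hkeep k i hmem]
            rw [hEq]
            exact ih i hi
      obtain ⟨i0⟩ := Fin.pos_iff_nonempty.1 hn
      refine ⟨(Finset.univ.sup fun s => ks s) + 1, fun k hk i => ?_⟩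
      exact claim (π i) k
        (lt_of_lt_of_le (Nat.lt_succ_of_le
          (Finset.le_sup (f := fun s => ks s) (Finset.mem_univ (π i)))) hk) i rfl
  -- conclusion
  rw [tendsto_pi_nhds]
  intro i
  rw [Metric.tendsto_atTop]
  intro ε hε
  have htend : Tendsto (fun p : ℕ => θ ^ p * (c * w i)) atTop (nhds 0) := by
    simpa using (tendsto_pow_atTop_nhds_zero_of_lt_one hθ0 hθ1).mul_const (c * w i)
  obtain ⟨p, hp⟩ := (htend.eventually (gt_mem_nhds hε)).exists
  obtain ⟨K, hK⟩ := L2 p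
  refine ⟨K, fun k hk => ?_⟩
  have : dist (x k i) (xstar i) = E k i := by rw [hE, Complex.dist_eq]
  rw [this]
  exact lt_of_le_of_lt (hK k hk i) hp
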